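/- Let b ≥ 2. For every positive integer t, there exist positive integers n and d such that every term of the arithmetic progression {n + jd : 0 ≤ j ≤ t−1} is b-anti-Niven. -/

import Mathlib

/-- Base-`b` digit sum of `n`. -/
def sdig (b n : ℕ) : ℕ := (Nat.digits b n).sum

/-- A positive integer `n` is `b`-anti-Niven if it is coprime to its base-`b` digit sum. -/
def AntiNiven (b n : ℕ) : Prop := 0 < n ∧ Nat.gcd n (sdig b n) = 1

lemma sdig_add_mul {b : ℕ} (hb : 2 ≤ b) {u : ℕ} (v : ℕ) (hu : u < b) :
    sdig b (u + b * v) = u + sdig b v := by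
  rcases Nat.eq_zero_or_pos (u + b * v) with h | h
  · have hu0 : u = 0 := by omega
    have hbv : b * v = 0 := by omega
    have hv0 : v = 0 := by rcases Nat.mul_eq_zero.mp hbv with h' | h' <;> omega
    simp [hu0, hv0, sdig]
  · unfold sdig
    rw [Nat.digits_def' (by omega : 1 < b) h]
    simp only [List.sum_cons]
    congr 1
    · rw [Nat.add_mul_mod_self_left, Nat.mod_eq_of_lt hu]
    · congr 1
      rw [Nat.add_mul_div_left _ _ (by omega : 0 < b), Nat.div_eq_of_lt hu, zero_add]

lemma sdig_split {b : ℕ} (hb : 2 ≤ b) (M : ℕ) :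
    ∀ x y : ℕ, x < b ^ M → sdig b (x + b ^ M * y) = sdig b x + sdig b y := by
  induction M with
  | zero =>
    intro x y hx
    have hx0 : x = 0 := by simpa using hx
    simp [hx0, sdig]
  | succ M ih =>
    intro x y hx
    have hb0 : 0 < b := by omega
    have hv : x / b < b ^ M := by
      rw [Nat.div_lt_iff_lt_mul hb0, ← pow_succ]; exact hx
    have key : x + b ^ (M + 1) * y = x % b + b * (x / b + b ^ M * y) := by
      have h1 : x % b + b * (x / b) = x := Nat.mod_add_div x b
      calc x + b ^ (M + 1) * y = (x % b + b * (x / b)) + b ^ (M + 1) * y := by rw [h1]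
        _ = x % b + b * (x / b + b ^ M * y) := by ring
    have hx2 : sdig b x = x % b + sdig b (x / b) := by
      conv_lhs => rw [← Nat.mod_add_div x b]
      exact sdig_add_mul hb _ (Nat.mod_lt x hb0)
    rw [key, sdig_add_mul hb _ (Nat.mod_lt x hb0), ih (x / b) y hv, hx2]
    ring

lemma sdig_compl {b : ℕ} (hb : 2 ≤ b) :
    ∀ (E : ℕ) (x : ℕ), x < b ^ E →
      sdig b (b ^ E - 1 - x) + sdig b x = E * (b - 1) := by
  intro E
  induction E with
  | zero =>
    intro x hx
    have hx0 : x = 0 := by simpa using hx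
    simp [hx0, sdig]
  | succ E ih =>
    intro x hx
    have hb0 : 0 < b := by omega
    have hu : x % b < b := Nat.mod_lt x hb0
    have hv : x / b < b ^ E := by
      rw [Nat.div_lt_iff_lt_mul hb0,  ← pow_succ]; exact hx
    have h1 : x % b + b * (x / b) = x := Nat.mod_add_div x b
    have h2 : b * (b ^ E - 1 - x / b) = b * b ^ E - b * 1 - b * (x / b) := by
      rw [Nat.mul_sub, Nat.mul_sub]
    have h3 : b ^ (E + 1) = b * b ^ E := by rw [pow_succ]; ring
    have h5 : b * (x / b + 1) ≤ b * b ^ E := Nat.mul_le_mul_left b hv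
    have h6 : b * (x / b + 1) = b * (x / b) + b := by ring
    have key : b ^ (E + 1) - 1 - x = (b - 1 - x % b) + b * (b ^ E - 1 - x / b) := by
      omega
    have hx2 : sdig b x = x % b + sdig b (x / b) := by
      conv_lhs => rw [← Nat.mod_add_div x b]
      exact sdig_add_mul hb _ hu
    have hih := ih (x / b) hv
    have hmul : (E + 1) * (b - 1) = E * (b - 1) + (b - 1) := by ring
    rw [key, sdig_add_mul hb _ (by omega : b - 1 - x % b < b), hx2]
    omega

lemma sdig_mul_pred {b : ℕ} (hb : 2 ≤ b) (E c : ℕ) (hc1 : 1 ≤ c) (hc2 : c ≤ b ^ E) :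
    sdig b (c * (b ^ E - 1)) = E * (b - 1) := by
  have hbE : 1 ≤ b ^ E := Nat.one_le_pow _ _ (by omega)
  have h3 : c - 1 ≤ b ^ E - 1 := by omega
  have key : c * (b ^ E - 1) = (b ^ E - 1 - (c - 1)) + b ^ E * (c - 1) := by
    zify [hbE, hc1, h3]
    ring
  have h4 := sdig_compl hb E (c - 1) (by omega)
  rw [key, sdig_split hb E _ (c - 1) (by omega)]
  omega

lemma geom_nat {b : ℕ} (hb : 1 ≤ b) :
    ∀ q : ℕ, (b - 1) * (∑ i ∈ Finset.range q, b ^ i) = b ^ q - 1 := by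
  intro q
  induction q with
  | zero => simp
  | succ q ih =>
    rw [Finset.sum_range_succ, Nat.mul_add, ih]
    have h1 : (b - 1) * b ^ q = b * b ^ q - 1 * b ^ q := tsub_mul b 1 (b ^ q)
    have h1' : 1 * b ^ q = b ^ q := one_mul _
    have h2 : b ^ (q + 1) = b * b ^ q := by rw [pow_succ]; ring
    have h3 : 1 ≤ b ^ q := Nat.one_le_pow _ _ (by omega)
    have h4 : b ^ q ≤ b * b ^ q := Nat.le_mul_of_pos_left _ (by omega)
    omega

lemma rep_sdig {b q : ℕ} (hb : 2 ≤ b) (hq : 1 ≤ q) :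
    ∀ k : ℕ, sdig b (∑ i ∈ Finset.range k, b ^ (q * i)) = k ∧
      (∑ i ∈ Finset.range k, b ^ (q * i)) < b ^ (q * k) := by
  intro k
  induction k with
  | zero => simp [sdig]
  | succ k ih =>
    obtain ⟨ih1, ih2⟩ := ih
    have hsum : ∑ i ∈ Finset.range (k + 1), b ^ (q * i)
        = (∑ i ∈ Finset.range k, b ^ (q * i)) + b ^ (q * k) * 1 := by
      rw [Finset.sum_range_succ, mul_one]
    have hone : sdig b 1 = 1 := by
      unfold sdig
      rw [Nat.digits_def' (by omega : 1 < b) one_pos]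
      simp [Nat.mod_eq_of_lt (by omega : 1 < b), Nat.div_eq_of_lt (by omega : 1 < b)]
    constructor
    · rw [hsum, sdig_split hb (q * k) _ 1 ih2, hone, ih1]
    · rw [hsum, mul_one]
      have h2 : b ^ (q * k) * 2 ≤ b ^ (q * k) * b := Nat.mul_le_mul_left _ hb
      have h2' : b ^ (q * k) * 2 = b ^ (q * k) + b ^ (q * k) := by ring
      have hqk : q * k + 1 ≤ q * (k + 1) := by
        have : q * (k + 1) = q * k + q := by ring
        omega
      have h3 : b ^ (q * k) * b ≤ b ^ (q * (k + 1)) := by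
        rw [← pow_succ]
        exact Nat.pow_le_pow_right (by omega) hqk
      omega

theorem stmt_4 (b : ℕ) (hb : 2 ≤ b) :
    ∀ t : ℕ, 0 < t → ∃ n d : ℕ, 0 < n ∧ 0 < d ∧
      ∀ j : ℕ, j ≤ t - 1 → AntiNiven b (n + j * d) := by
  intro t ht
  obtain ⟨q, hqle, hq⟩ := Nat.exists_infinite_primes (max (b + 1) (t + 1))
  have hqb : b + 1 ≤ q := le_trans (le_max_left _ _) hqle
  have hqt : t + 1 ≤ q := le_trans (le_max_right _ _) hqle
  have hq2 : 2 ≤ q := hq.two_le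
  have hbq1' : b ≤ b ^ q := by
    calc b = b ^ 1 := (pow_one b).symm
      _ ≤ b ^ q := Nat.pow_le_pow_right (by omega) (by omega)
  have htbq : t < b ^ q := by
    have h1 : q < 2 ^ q := Nat.lt_two_pow_self (n := q)
    have h2 : 2 ^ q ≤ b ^ q := Nat.pow_le_pow_left hb q
    omega
  set N := ∑ i ∈ Finset.range q, b ^ i with hN
  have hgeom : (b - 1) * N = b ^ q - 1 := geom_nat (by omega) q
  have hNge : 1 + b ≤ N := by
    have hsub : ({0, 1} : Finset ℕ) ⊆ Finset.range q := by
      intro i hi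
      simp only [Finset.mem_insert, Finset.mem_singleton] at hi
      simp only [Finset.mem_range]
      omega
    have hle := Finset.sum_le_sum_of_subset (f := fun i => b ^ i) hsub
    have hpair : ∑ i ∈ ({0, 1} : Finset ℕ), b ^ i = 1 + b := by
      rw [Finset.sum_pair (by norm_num : (0 : ℕ) ≠ 1)]
      simp
    rw [hpair] at hle
    exact hle
  set p := N.minFac with hpdef
  have hNne1 : N ≠ 1 := by omega
  have hp : p.Prime := Nat.minFac_prime hNne1
  haveI : Fact p.Prime := ⟨hp⟩
  have hpN : p ∣ N := Nat.minFac_dvd N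
  have hpW : p ∣ b ^ q - 1 := hgeom ▸ hpN.mul_left (b - 1)
  have hbqpos : 1 ≤ b ^ q := by omega
  have hpb : ¬ p ∣ b := by
    intro h
    have h1 : p ∣ b ^ q := dvd_pow h (by omega)
    have h2 := Nat.dvd_sub h1 hpW
    rw [show b ^ q - (b ^ q - 1) = 1 by omega] at h2
    have := Nat.dvd_one.mp h2
    have := hp.one_lt
    omega
  have hqnb1 : ¬ q ∣ b - 1 := by
    intro h
    have := Nat.le_of_dvd (by omega) h
    omega
  have hpq : p ≠ q := by
    intro h
    haveI : Fact q.Prime := ⟨hq⟩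
    have h1 : ((b ^ q - 1 : ℕ) : ZMod q) = 0 :=
      (ZMod.natCast_eq_zero_iff _ _).mpr (h ▸ hpW)
    rw [Nat.cast_sub hbqpos] at h1
    push_cast at h1
    have h2 : (b : ZMod q) ^ q = (b : ZMod q) := ZMod.pow_card _
    have h3 : (b : ZMod q) = 1 := by
      rw [← h2]
      rwa [sub_eq_zero] at h1
    have h4 : ((b - 1 : ℕ) : ZMod q) = 0 := by
      rw [Nat.cast_sub (by omega : 1 ≤ b)]
      push_cast
      rw [h3, sub_self]
    exact hqnb1 ((ZMod.natCast_eq_zero_iff _ _).mp h4)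
  have hpb1 : ¬ p ∣ (b - 1) := by
    intro h
    have hb1' : ((b - 1 : ℕ) : ZMod p) = 0 := (ZMod.natCast_eq_zero_iff _ _).mpr h
    rw [Nat.cast_sub (by omega : 1 ≤ b)] at hb1'
    push_cast at hb1'
    have hbone : (b : ZMod p) = 1 := by rwa [sub_eq_zero] at hb1'
    have hNc : ((N : ℕ) : ZMod p) = 0 := (ZMod.natCast_eq_zero_iff _ _).mpr hpN
    rw [hN] at hNc
    push_cast at hNc
    have hsum1 : ∑ i ∈ Finset.range q, (b : ZMod p) ^ i = (q : ZMod p) := by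
      simp [hbone]
    rw [hsum1] at hNc
    have hdq : p ∣ q := (ZMod.natCast_eq_zero_iff _ _).mp hNc
    exact hpq ((Nat.prime_dvd_prime_iff_eq hp hq).mp hdq)
  have hpq' : ¬ p ∣ q := fun h => hpq ((Nat.prime_dvd_prime_iff_eq hp hq).mp h)
  have hbq1 : (b : ZMod p) ^ q = 1 := by
    have h1 : ((b ^ q - 1 : ℕ) : ZMod p) = 0 := (ZMod.natCast_eq_zero_iff _ _).mpr hpW
    rw [Nat.cast_sub hbqpos] at h1
    push_cast at h1
    rwa [sub_eq_zero] at h1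
  set a := q * (b - 1) with ha
  have hapos : 0 < a := Nat.mul_pos (by omega) (by omega)
  have halt : a < p ^ a := Nat.lt_pow_self (n := a) hp.one_lt
  set σ := p ^ a - a with hσdef
  have hσ : a + σ = p ^ a := by omega
  set M := q + t with hM
  obtain ⟨hRs, hRlt⟩ := rep_sdig hb (by omega : 1 ≤ q) σ
  set R := ∑ i ∈ Finset.range σ, b ^ (q * i) with hR
  refine ⟨(b ^ q - 1) + b ^ M * R, b ^ q - 1, by omega, by omega, ?_⟩
  intro j hj
  have hc : j + 1 ≤ t := by omega
  have hTeq : (b ^ q - 1 + b ^ M * R) + j * (b ^ q - 1)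
      = (j + 1) * (b ^ q - 1) + b ^ M * R := by ring
  rw [hTeq]
  have hlow : (j + 1) * (b ^ q - 1) < b ^ M := by
    have h1 : (j + 1) * (b ^ q - 1) ≤ t * b ^ q := Nat.mul_le_mul hc (by omega)
    have h2 : t < b ^ t := lt_of_lt_of_le (Nat.lt_two_pow_self (n := t)) (Nat.pow_le_pow_left hb t)
    have h3 : t * b ^ q < b ^ t * b ^ q :=
      mul_lt_mul_of_pos_right h2 (by omega : 0 < b ^ q)
    have h4 : b ^ t * b ^ q = b ^ M := by rw [hM, ← pow_add, add_comm]
    omega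
  have hsd : sdig b ((j + 1) * (b ^ q - 1) + b ^ M * R) = p ^ a := by
    rw [sdig_split hb M _ R hlow,
      sdig_mul_pred hb q (j + 1) (by omega) (by omega : j + 1 ≤ b ^ q), hRs]
    omega
  have hpT : ¬ p ∣ ((j + 1) * (b ^ q - 1) + b ^ M * R) := by
    intro hdvd
    have h0 : (((j + 1) * (b ^ q - 1) + b ^ M * R : ℕ) : ZMod p) = 0 :=
      (ZMod.natCast_eq_zero_iff _ _).mpr hdvd
    have h1 : ((b ^ q - 1 : ℕ) : ZMod p) = 0 := (ZMod.natCast_eq_zero_iff _ _).mpr hpW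
    have hRc : ((R : ℕ) : ZMod p) = (σ : ZMod p) := by
      rw [hR]
      push_cast
      have hterm : ∀ i ∈ Finset.range σ, (b : ZMod p) ^ (q * i) = 1 := by
        intro i _
        rw [pow_mul, hbq1, one_pow]
      rw [Finset.sum_congr rfl hterm]
      simp
    rw [Nat.cast_add, Nat.cast_mul, Nat.cast_mul, Nat.cast_pow, h1, hRc, mul_zero,
      zero_add] at h0
    have hσc : (σ : ZMod p) = -((a : ℕ) : ZMod p) := by
      have h2 : ((a + σ : ℕ) : ZMod p) = ((p ^ a : ℕ) : ZMod p) := by rw [hσ]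
      push_cast at h2
      rw [ZMod.natCast_self, zero_pow (by omega : a ≠ 0)] at h2
      exact eq_neg_of_add_eq_zero_right h2
    rw [hσc] at h0
    have hbne : (b : ZMod p) ≠ 0 := fun h =>
      hpb ((ZMod.natCast_eq_zero_iff _ _).mp h)
    have hane : ((a : ℕ) : ZMod p) ≠ 0 := by
      intro h
      have hdvd2 : p ∣ a := (ZMod.natCast_eq_zero_iff _ _).mp h
      rw [ha] at hdvd2
      rcases (Nat.Prime.dvd_mul hp).mp hdvd2 with h' | h'
      · exact hpq' h'
      · exact hpb1 h'
    exact (mul_ne_zero (pow_ne_zero _ hbne) (neg_ne_zero.mpr hane)) h0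
  have hcop : Nat.Coprime p ((j + 1) * (b ^ q - 1) + b ^ M * R) :=
    (Nat.Prime.coprime_iff_not_dvd hp).mpr hpT
  refine ⟨?_, ?_⟩
  · have h1 : 1 ≤ (j + 1) * (b ^ q - 1) := Nat.one_le_iff_ne_zero.mpr ?_
    · omega
    · have := Nat.mul_pos (show 0 < j + 1 by omega) (show 0 < b ^ q - 1 by omega)
      omega
  · rw [hsd]
    exact Nat.Coprime.pow_right a hcop.symm
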